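/- If a graph is dense in ℝ^d for some d ≥ 2, then it is not sparse in ℝ^{d'} for any d' < d. -/

import Mathlib

open MeasureTheory ENNReal

private lemma coord_le_dist' {d : ℕ} (x y : EuclideanSpace ℝ (Fin d)) (i : Fin d) :
    |x i - y i| ≤ dist x y := by
  rw [EuclideanSpace.dist_eq]
  calc |x i - y i| = Real.sqrt (dist (x i) (y i) ^ 2) := by
        rw [Real.sqrt_sq dist_nonneg, Real.dist_eq]
    _ ≤ Real.sqrt (∑ j, dist (x j) (y j) ^ 2) :=
        Real.sqrt_le_sqrt (Finset.single_le_sum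
          (f := fun j => dist (x j) (y j) ^ 2) (fun j _ => sq_nonneg _) (Finset.mem_univ i))

private lemma dist_le_of_coords' {d : ℕ} (x y : EuclideanSpace ℝ (Fin d)) (c : ℝ) (hc : 0 ≤ c)
    (h : ∀ i, |x i - y i| ≤ c) : dist x y ≤ Real.sqrt d * c := by
  rw [EuclideanSpace.dist_eq]
  have h1 : ∑ i, dist (x i) (y i) ^ 2 ≤ ∑ _i : Fin d, c ^ 2 := by
    refine Finset.sum_le_sum fun i _ => ?_
    rw [Real.dist_eq]
    exact pow_le_pow_left₀ (abs_nonneg _) (h i) 2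
  have h2 : ∑ _i : Fin d, c ^ 2 = (d : ℝ) * c ^ 2 := by
    simp [Finset.sum_const, Finset.card_univ]
  calc Real.sqrt (∑ i, dist (x i) (y i) ^ 2) ≤ Real.sqrt ((d : ℝ) * c ^ 2) := by
        rw [← h2]; exact Real.sqrt_le_sqrt h1
    _ = Real.sqrt d * c := by
        rw [Real.sqrt_mul (Nat.cast_nonneg d), Real.sqrt_sq hc]

private lemma one_le_abs_natCast_sub' {a b : ℕ} (h : a ≠ b) : (1 : ℝ) ≤ |(a : ℝ) - b| := by
  have h' : ((a : ℤ) - b) ≠ 0 := sub_ne_zero.mpr (by exact_mod_cast h)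
  have h2 := Int.one_le_abs h'
  have h3 : ((|(a : ℤ) - b| : ℤ) : ℝ) = |(a : ℝ) - b| := by push_cast; ring_nf
  rw [← h3]; exact_mod_cast h2

private lemma walk_dist_le' {V : Type*} {G : SimpleGraph V} {d' : ℕ}
    (f' : V → EuclideanSpace ℝ (Fin d')) (r : ℝ)
    (hr : ∀ u v, G.Adj u v → dist (f' u) (f' v) ≤ r) :
    ∀ {u v : V} (p : G.Walk u v), dist (f' u) (f' v) ≤ r * p.length := by
  intro u v p
  induction p with
  | nil => simp
  | @cons a b c h p ih =>
    have hlen : ((SimpleGraph.Walk.cons h p).length : ℝ) = (p.length : ℝ) + 1 := by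
      simp [SimpleGraph.Walk.length_cons]
    calc dist (f' a) (f' c) ≤ dist (f' a) (f' b) + dist (f' b) (f' c) := dist_triangle _ _ _
      _ ≤ r + r * p.length := add_le_add (hr _ _ h) ih
      _ = r * ((SimpleGraph.Walk.cons h p).length : ℝ) := by rw [hlen]; ring

/-- If a graph is dense in ℝ^d for some d ≥ 2 (it admits a drawing with
finite maximum uncovered diameter and positive asymptotic distance ratio), then it is
not sparse in ℝ^{d'} for any d' < d (it admits no drawing with positive minimum node
distance and finite maximum connected range). -/
theorem dense_not_sparse_in_lower_dim {V : Type*} (G : SimpleGraph V)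
    (hG : G.Connected) {d d' : ℕ} (hd : 2 ≤ d) (hd' : d' < d)
    (hdense : ∃ f : V → EuclideanSpace ℝ (Fin d), ∃ γ : ℝ, 0 < γ ∧
      (∀ x : EuclideanSpace ℝ (Fin d), ∃ u : V, dist (f u) x < γ / 2) ∧
      ∃ α β : ℝ, 0 < α ∧ 0 < β ∧
        ∀ u v : V, (G.dist u v : ℝ) ≤ α * dist (f u) (f v) + β) :
    ¬ ∃ f' : V → EuclideanSpace ℝ (Fin d'),
      (∃ s : ℝ, 0 < s ∧ ∀ u v : V, u ≠ v → s ≤ dist (f' u) (f' v)) ∧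
      (∃ r : ℝ, ∀ u v : V, G.Adj u v → dist (f' u) (f' v) ≤ r) := by
  rintro ⟨f', ⟨s, hs, hsep⟩, ⟨r, hr⟩⟩
  obtain ⟨f, γ, hγ, hcov, α, β, hα, hβ, hdist⟩ := hdense
  choose uu huu using hcov
  -- First: there exist two distinct vertices (needed for the d' = 0 case).
  have i0 : Fin d := ⟨0, by omega⟩
  have two_distinct : ∃ a b : V, a ≠ b := by
    set z : EuclideanSpace ℝ (Fin d) := WithLp.toLp 2 (fun _ => 2 * γ) with hz
    have hz0 : z i0 - (0 : EuclideanSpace ℝ (Fin d)) i0 = 2 * γ := by simp [hz]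
    have hdz : 2 * γ ≤ dist z 0 := by
      have hc := coord_le_dist' z 0 i0
      rw [hz0] at hc
      calc 2 * γ ≤ |2 * γ| := le_abs_self _
        _ ≤ dist z 0 := hc
    refine ⟨uu z, uu 0, fun hab => ?_⟩
    have h1 := huu z
    have h2 := huu 0
    rw [hab] at h1
    have h3 := dist_triangle z (f (uu 0)) 0
    rw [dist_comm z (f (uu 0))] at h3
    nlinarith
  obtain ⟨a, b, hab⟩ := two_distinct
  -- Case d' = 0: the target space is a single point.
  rcases Nat.eq_zero_or_pos d' with hd0 | hd0
  · subst hd0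
    haveI : Subsingleton (EuclideanSpace ℝ (Fin 0)) := by
      refine ⟨fun x y => ?_⟩
      ext i
      exact absurd i.2 (by omega)
    have h1 := hsep a b hab
    rw [Subsingleton.elim (f' a) (f' b), dist_self] at h1
    linarith
  -- Main case: d' ≥ 1.
  haveI : Nonempty (Fin d') := ⟨⟨0, hd0⟩⟩
  haveI : Nontrivial (EuclideanSpace ℝ (Fin d')) := by
    refine ⟨WithLp.toLp 2 (fun _ => 0 : Fin d' → ℝ), WithLp.toLp 2 (fun _ => 1 : Fin d' → ℝ), fun h => ?_⟩
    have h1 := congrArg (fun v => v ⟨0, hd0⟩) h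
    simp at h1
  obtain ⟨r', hr'def⟩ : ∃ r' : ℝ, r' = max r 0 := ⟨_, rfl⟩
  have hr'0 : 0 ≤ r' := hr'def ▸ le_max_right _ _
  have hr' : ∀ u v, G.Adj u v → dist (f' u) (f' v) ≤ r' :=
    fun u v h => (hr u v h).trans (hr'def ▸ le_max_left _ _)
  have key : ∀ u v : V, dist (f' u) (f' v) ≤ r' * (α * dist (f u) (f v) + β) := by
    intro u v
    obtain ⟨p, hp⟩ := hG.exists_walk_length_eq_dist u v
    calc dist (f' u) (f' v) ≤ r' * p.length := walk_dist_le' f' r' hr' p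
      _ = r' * (G.dist u v : ℝ) := by rw [hp]
      _ ≤ r' * (α * dist (f u) (f v) + β) :=
          mul_le_mul_of_nonneg_left (hdist u v) hr'0
  have hsqd : (0:ℝ) ≤ Real.sqrt d := Real.sqrt_nonneg _
  -- the constant M, independent of n
  obtain ⟨M, hM⟩ : ∃ M : ℝ, M = s / 2 + r' * (α * (Real.sqrt d * γ + γ) + β) := ⟨_, rfl⟩
  have hXnn : 0 ≤ r' * (α * (Real.sqrt d * γ + γ) + β) := mul_nonneg hr'0 (by positivity)
  have hM0 : 0 < M := by rw [hM]; linarith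
  obtain ⟨n, hn⟩ := exists_nat_gt (max (M ^ d' * (2 / s) ^ d') 1)
  have hn1R : (1:ℝ) ≤ n := le_trans (le_max_right _ 1) hn.le
  have hn0 : 0 < n := by exact_mod_cast lt_of_lt_of_le one_pos hn1R
  -- the grid of points
  set pt : (Fin d → Fin n) → EuclideanSpace ℝ (Fin d) :=
    fun k => WithLp.toLp 2 (fun i => γ * ((k i : ℕ) : ℝ)) with hptdef
  have hptapp : ∀ (k : Fin d → Fin n) (i : Fin d), pt k i = γ * ((k i : ℕ) : ℝ) :=
    fun k i => rfl
  have habspt : ∀ (k k' : Fin d → Fin n) (i : Fin d),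
      |pt k i - pt k' i| = γ * |((k i : ℕ) : ℝ) - ((k' i : ℕ) : ℝ)| := by
    intro k k' i
    rw [hptapp, hptapp, ← mul_sub, abs_mul, abs_of_pos hγ]
  have hpt_sep : ∀ k k' : Fin d → Fin n, k ≠ k' → γ ≤ dist (pt k) (pt k') := by
    intro k k' hkk'
    obtain ⟨i, hi⟩ := Function.ne_iff.mp hkk'
    have hvne : (k i : ℕ) ≠ (k' i : ℕ) := fun h => hi (Fin.ext h)
    have h1 : (1:ℝ) ≤ |((k i : ℕ) : ℝ) - ((k' i : ℕ) : ℝ)| := one_le_abs_natCast_sub' hvne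
    calc γ = γ * 1 := (mul_one γ).symm
      _ ≤ γ * |((k i : ℕ) : ℝ) - ((k' i : ℕ) : ℝ)| := mul_le_mul_of_nonneg_left h1 hγ.le
      _ = |pt k i - pt k' i| := (habspt k k' i).symm
      _ ≤ dist (pt k) (pt k') := coord_le_dist' _ _ i
  have hpt_diam : ∀ k k' : Fin d → Fin n, dist (pt k) (pt k') ≤ Real.sqrt d * (γ * n) := by
    intro k k'
    refine dist_le_of_coords' _ _ _ (by positivity) fun i => ?_
    have ha : ((k i : ℕ) : ℝ) ≤ n := by exact_mod_cast (k i).isLt.le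
    have hb : ((k' i : ℕ) : ℝ) ≤ n := by exact_mod_cast (k' i).isLt.le
    have ha0 : (0:ℝ) ≤ ((k i : ℕ) : ℝ) := Nat.cast_nonneg _
    have hb0 : (0:ℝ) ≤ ((k' i : ℕ) : ℝ) := Nat.cast_nonneg _
    rw [habspt]
    have h1 : |((k i : ℕ) : ℝ) - ((k' i : ℕ) : ℝ)| ≤ n :=
      abs_le.mpr ⟨by linarith, by linarith⟩
    exact mul_le_mul_of_nonneg_left h1 hγ.le
  -- the vertices
  set w : (Fin d → Fin n) → V := fun k => uu (pt k) with hwdef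
  have hwnear : ∀ k : Fin d → Fin n, dist (f (w k)) (pt k) < γ / 2 := fun k => huu (pt k)
  have hw_inj : Function.Injective w := by
    intro k k' h
    by_contra hne
    have h1 := hpt_sep k k' hne
    have ha := hwnear k
    have hb := hwnear k'
    have e : f (w k) = f (w k') := congrArg f h
    have h4 : dist (pt k) (pt k') ≤ dist (pt k) (f (w k')) + dist (f (w k')) (pt k') :=
      dist_triangle _ _ _
    rw [← e, dist_comm (pt k) (f (w k))] at h4
    have hb' : dist (f (w k)) (pt k') < γ / 2 := by rw [e]; exact hb
    linarith
  set p : (Fin d → Fin n) → EuclideanSpace ℝ (Fin d') := fun k => f' (w k) with hpdef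
  have hp_sep : ∀ k k' : Fin d → Fin n, k ≠ k' → s ≤ dist (p k) (p k') :=
    fun k k' h => hsep _ _ fun hw => h (hw_inj hw)
  set k0 : Fin d → Fin n := fun _ => ⟨0, hn0⟩ with hk0
  obtain ⟨R, hRdef⟩ : ∃ R : ℝ, R = r' * (α * (Real.sqrt d * (γ * n) + γ) + β) := ⟨_, rfl⟩
  have hR0 : 0 ≤ R := by rw [hRdef]; exact mul_nonneg hr'0 (by positivity)
  have hpR : ∀ k, dist (p k) (p k0) ≤ R := by
    intro k
    have h1 : dist (f (w k)) (f (w k0)) ≤ Real.sqrt d * (γ * n) + γ := by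
      have t1 := hwnear k
      have t2 := hwnear k0
      have t3 := hpt_diam k k0
      have t4 : dist (f (w k)) (f (w k0)) ≤
          dist (f (w k)) (pt k) + dist (pt k) (pt k0) + dist (pt k0) (f (w k0)) :=
        dist_triangle4 _ _ _ _
      rw [dist_comm (pt k0) (f (w k0))] at t4
      linarith
    calc dist (p k) (p k0) ≤ r' * (α * dist (f (w k)) (f (w k0)) + β) := key _ _
      _ ≤ R := by
          rw [hRdef]
          exact mul_le_mul_of_nonneg_left
            (add_le_add_left (mul_le_mul_of_nonneg_left h1 hα.le) β) hr'0
  obtain ⟨ρ, hρdef⟩ : ∃ ρ : ℝ, ρ = s / 2 + R := ⟨_, rfl⟩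
  have hρ0 : 0 ≤ ρ := by rw [hρdef]; positivity
  -- volume argument
  have hdisj : (↑(Finset.univ : Finset (Fin d → Fin n)) : Set (Fin d → Fin n)).PairwiseDisjoint
      (fun k => Metric.ball (p k) (s / 2)) := by
    intro k _ k' _ hkk'
    exact Metric.ball_disjoint_ball (by linarith [hp_sep k k' hkk'])
  have hsub : (⋃ k ∈ (Finset.univ : Finset (Fin d → Fin n)), Metric.ball (p k) (s / 2)) ⊆
      Metric.ball (p k0) ρ := by
    intro z hz
    simp only [Set.mem_iUnion, Metric.mem_ball] at hz ⊢
    obtain ⟨k, _, hzk⟩ := hz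
    rw [hρdef]
    calc dist z (p k0) ≤ dist z (p k) + dist (p k) (p k0) := dist_triangle _ _ _
      _ < s / 2 + R := add_lt_add_of_lt_of_le hzk (hpR k)
  have hball : ∀ (x : EuclideanSpace ℝ (Fin d')) (t : ℝ), 0 ≤ t →
      volume (Metric.ball x t) =
        ENNReal.ofReal (t ^ d') * volume (Metric.ball (0 : EuclideanSpace ℝ (Fin d')) 1) := by
    intro x t ht
    rw [Measure.addHaar_ball volume x ht, finrank_euclideanSpace_fin]
  obtain ⟨B1, hB1⟩ : ∃ B1 : ℝ≥0∞,
      B1 = volume (Metric.ball (0 : EuclideanSpace ℝ (Fin d')) 1) := ⟨_, rfl⟩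
  have hB1pos : B1 ≠ 0 := by
    rw [hB1]; exact (Metric.measure_ball_pos volume _ one_pos).ne'
  have hB1top : B1 ≠ ⊤ := by rw [hB1]; exact measure_ball_lt_top.ne
  have hcard : Fintype.card (Fin d → Fin n) = n ^ d := by
    rw [Fintype.card_fun, Fintype.card_fin, Fintype.card_fin]
  have hchain : ((n : ℝ≥0∞) ^ d * ENNReal.ofReal ((s / 2) ^ d')) * B1 ≤
      ENNReal.ofReal (ρ ^ d') * B1 := by
    have hmeas := measure_biUnion_finset (μ := volume) hdisj
      (fun k _ => measurableSet_ball)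
    calc ((n : ℝ≥0∞) ^ d * ENNReal.ofReal ((s / 2) ^ d')) * B1
        = ∑ k : Fin d → Fin n, volume (Metric.ball (p k) (s / 2)) := by
          rw [Finset.sum_congr rfl fun k _ => hball (p k) (s / 2) (by positivity)]
          rw [Finset.sum_const, Finset.card_univ, hcard, nsmul_eq_mul, ← hB1]
          push_cast
          ring
      _ = volume (⋃ k ∈ (Finset.univ : Finset (Fin d → Fin n)),
            Metric.ball (p k) (s / 2)) := hmeas.symm
      _ ≤ volume (Metric.ball (p k0) ρ) := measure_mono hsub
      _ = ENNReal.ofReal (ρ ^ d') * B1 := by rw [hball _ _ hρ0, hB1]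
  have hEN : (n : ℝ≥0∞) ^ d * ENNReal.ofReal ((s / 2) ^ d') ≤ ENNReal.ofReal (ρ ^ d') :=
    (ENNReal.mul_le_mul_iff_left hB1pos hB1top).mp hchain
  have hreal : (n : ℝ) ^ d * (s / 2) ^ d' ≤ ρ ^ d' := by
    have h1 : (n : ℝ≥0∞) ^ d = ENNReal.ofReal ((n : ℝ) ^ d) := by
      rw [ENNReal.ofReal_pow (Nat.cast_nonneg n), ENNReal.ofReal_natCast]
    rw [h1, ← ENNReal.ofReal_mul (by positivity)] at hEN
    exact (ENNReal.ofReal_le_ofReal_iff (by positivity)).mp hEN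
  -- final arithmetic contradiction
  have hρM : ρ ≤ M * n := by
    rw [hρdef, hRdef, hM]
    have e1 : 0 ≤ r' * (α * γ) := by positivity
    have e2 : 0 ≤ r' * β := by positivity
    have e3 : (0:ℝ) ≤ s / 2 := by positivity
    nlinarith [mul_le_mul_of_nonneg_left hn1R e1, mul_le_mul_of_nonneg_left hn1R e2,
      mul_le_mul_of_nonneg_left hn1R e3]
  have h2 : ρ ^ d' ≤ M ^ d' * (n : ℝ) ^ d' := by
    rw [← mul_pow]
    exact pow_le_pow_left₀ hρ0 hρM d'
  have h3 : (n : ℝ) ^ d' * (n : ℝ) ≤ (n : ℝ) ^ d := by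
    rw [← pow_succ]
    exact pow_le_pow_right₀ hn1R hd'
  have hspos : (0:ℝ) < (s / 2) ^ d' := by positivity
  have hnpow : (0:ℝ) < (n : ℝ) ^ d' := by positivity
  have h4 : (n : ℝ) * (s / 2) ^ d' ≤ M ^ d' := by
    have h5 : ((n : ℝ) * (s / 2) ^ d') * (n : ℝ) ^ d' ≤ M ^ d' * (n : ℝ) ^ d' := by
      calc ((n : ℝ) * (s / 2) ^ d') * (n : ℝ) ^ d'
          = ((n : ℝ) ^ d' * (n : ℝ)) * (s / 2) ^ d' := by ring
        _ ≤ (n : ℝ) ^ d * (s / 2) ^ d' := mul_le_mul_of_nonneg_right h3 hspos.le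
        _ ≤ ρ ^ d' := hreal
        _ ≤ M ^ d' * (n : ℝ) ^ d' := h2
    exact le_of_mul_le_mul_right h5 hnpow
  have h6 : (n : ℝ) ≤ M ^ d' * (2 / s) ^ d' := by
    have hinv : ((s / 2) * (2 / s)) ^ d' = 1 := by
      rw [div_mul_div_comm, show s * 2 / (2 * s) = 1 by field_simp]
      exact one_pow d'
    have h7 : (0:ℝ) ≤ (2 / s) ^ d' := by positivity
    calc (n : ℝ) = (n : ℝ) * ((s / 2) ^ d' * (2 / s) ^ d') := by
          rw [← mul_pow, hinv, mul_one]
      _ = ((n : ℝ) * (s / 2) ^ d') * (2 / s) ^ d' := by ring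
      _ ≤ M ^ d' * (2 / s) ^ d' := mul_le_mul_of_nonneg_right h4 h7
  have h8 : M ^ d' * (2 / s) ^ d' < (n : ℝ) := lt_of_le_of_lt (le_max_left _ _) hn
  linarith
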